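/- Let v(y) = inf_x { cᵀ x : (x, y) ∈ P } where P ⊆ ℝ^{n_x} × ℝ^{n_y} is a generalized polyhedron with closure P̄. Then for every y, if y ∈ proj_y(P) then v(y) = inf_x { cᵀ x : (x, y) ∈ P̄ }, and if y ∉ proj_y(P) then v(y) = +∞. -/

import Mathlib

/-- for v(y) = inf { cᵀx : (x,y) ∈ P } with P a generalized
polyhedron and P̄ its topological closure: if y ∈ proj_y(P) then
v(y) = inf { cᵀx : (x,y) ∈ P̄ }; if y ∉ proj_y(P) then v(y) = +∞. -/
theorem stmt_9 {nx ny m m' : ℕ}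
    (A : Matrix (Fin m) (Fin nx) ℝ) (B : Matrix (Fin m) (Fin ny) ℝ)
    (C : Matrix (Fin m') (Fin nx) ℝ) (D : Matrix (Fin m') (Fin ny) ℝ)
    (a : Fin m → ℝ) (c' : Fin m' → ℝ) (c : Fin nx → ℝ)
    (P : Set ((Fin nx → ℝ) × (Fin ny → ℝ)))
    (hP : P = {z | a ≤ A.mulVec z.1 + B.mulVec z.2 ∧
                   ∀ i, c' i < C.mulVec z.1 i + D.mulVec z.2 i})
    (v : (Fin ny → ℝ) → EReal)
    (hv : ∀ y, v y = ⨅ x : {x : Fin nx → ℝ // (x, y) ∈ P},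
      ((∑ j, c j * (x : Fin nx → ℝ) j : ℝ) : EReal)) :
    ∀ y : Fin ny → ℝ,
      ((∃ x, (x, y) ∈ P) →
        v y = ⨅ x : {x : Fin nx → ℝ // (x, y) ∈ closure P},
          ((∑ j, c j * (x : Fin nx → ℝ) j : ℝ) : EReal)) ∧
      ((¬ ∃ x, (x, y) ∈ P) → v y = ⊤) := by
  -- the closed relaxation
  set Q : Set ((Fin nx → ℝ) × (Fin ny → ℝ)) :=
    {z | a ≤ A.mulVec z.1 + B.mulVec z.2 ∧
         ∀ i, c' i ≤ C.mulVec z.1 i + D.mulVec z.2 i} with hQdef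
  have hQclosed : IsClosed Q := by
    have h1 : Q = (⋂ i, {z : (Fin nx → ℝ) × (Fin ny → ℝ) |
          a i ≤ A.mulVec z.1 i + B.mulVec z.2 i}) ∩
        ⋂ i, {z : (Fin nx → ℝ) × (Fin ny → ℝ) |
          c' i ≤ C.mulVec z.1 i + D.mulVec z.2 i} := by
      ext z
      simp [hQdef, Pi.le_def, Set.mem_iInter]
    rw [h1]
    have hcont : ∀ (k : ℕ) (M : Matrix (Fin k) (Fin nx) ℝ)
        (N : Matrix (Fin k) (Fin ny) ℝ) (i : Fin k),
        Continuous fun z : (Fin nx → ℝ) × (Fin ny → ℝ) =>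
          M.mulVec z.1 i + N.mulVec z.2 i := by
      intro k M N i
      simp only [Matrix.mulVec, dotProduct]
      fun_prop
    exact IsClosed.inter
      (isClosed_iInter fun i => isClosed_le continuous_const
        (by simpa [Pi.add_apply] using hcont m A B i))
      (isClosed_iInter fun i => isClosed_le continuous_const (hcont m' C D i))
  have hPQ : P ⊆ Q := by
    rintro z hz
    rw [hP] at hz
    exact ⟨hz.1, fun i => (hz.2 i).le⟩
  have hclQ : closure P ⊆ Q := closure_minimal hPQ hQclosed
  intro y
  constructor
  · rintro ⟨x₀, hx₀⟩
    rw [hv y]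
    apply le_antisymm
    · -- v y ≤ inf over closure
      apply le_iInf
      rintro ⟨xb, hxb⟩
      -- segment points
      have hx₀Q := hPQ hx₀
      have hxbQ := hclQ hxb
      rw [hP] at hx₀
      set db : ℝ := ∑ j, c j * xb j with hdb
      set d0 : ℝ := ∑ j, c j * x₀ j with hd0
      have hseg : ∀ t : ℝ, 0 < t → t ≤ 1 →
          ((⨅ x : {x : Fin nx → ℝ // (x, y) ∈ P},
            ((∑ j, c j * (x : Fin nx → ℝ) j : ℝ) : EReal))
            ≤ ((db + t * (d0 - db) : ℝ) : EReal)) := by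
        intro t ht0 ht1
        set xt : Fin nx → ℝ := xb + t • (x₀ - xb) with hxt
        have hrow : ∀ (k : ℕ) (M : Matrix (Fin k) (Fin nx) ℝ)
            (N : Matrix (Fin k) (Fin ny) ℝ) (i : Fin k),
            M.mulVec xt i + N.mulVec y i =
              (M.mulVec xb i + N.mulVec y i)
              + t * ((M.mulVec x₀ i + N.mulVec y i)
                - (M.mulVec xb i + N.mulVec y i)) := by
          intro k M N i
          simp only [hxt, Matrix.mulVec_add, Matrix.mulVec_smul,
            Matrix.mulVec_sub, Pi.add_apply, Pi.smul_apply, Pi.sub_apply,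
            smul_eq_mul]
          ring
        have hmem : (xt, y) ∈ P := by
          rw [hP]
          constructor
          · intro i
            have h0 : a i ≤ A.mulVec x₀ i + B.mulVec y i := hx₀.1 i
            have hb : a i ≤ A.mulVec xb i + B.mulVec y i := hxbQ.1 i
            have := hrow m A B i
            simp only [Pi.add_apply] at this ⊢
            rw [this]
            nlinarith
          · intro i
            have h0 : c' i < C.mulVec x₀ i + D.mulVec y i := hx₀.2 i
            have hb : c' i ≤ C.mulVec xb i + D.mulVec y i := hxbQ.2 i
            have := hrow m' C D i
            rw [this]
            nlinarith
        have hval : (∑ j, c j * xt j) = db + t * (d0 - db) := by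
          have h : ∀ j, c j * xt j =
              c j * xb j + (t * (c j * x₀ j) - t * (c j * xb j)) := by
            intro j
            simp only [hxt, Pi.add_apply, Pi.smul_apply, Pi.sub_apply,
              smul_eq_mul]
            ring
          simp_rw [h, Finset.sum_add_distrib, Finset.sum_sub_distrib,
            ← Finset.mul_sum]
          rw [hdb, hd0]
          ring
        calc (⨅ x : {x : Fin nx → ℝ // (x, y) ∈ P},
              ((∑ j, c j * (x : Fin nx → ℝ) j : ℝ) : EReal))
            ≤ ((∑ j, c j * xt j : ℝ) : EReal) := iInf_le (ι := {x : Fin nx → ℝ // (x, y) ∈ P}) _ ⟨xt, hmem⟩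
          _ = ((db + t * (d0 - db) : ℝ) : EReal) := by rw [hval]
      -- now conclude inf ≤ db
      by_contra hcon
      push_neg at hcon
      obtain ⟨e, he1, he2⟩ := exists_between hcon
      induction e with
      | bot => exact absurd he1 (by simp)
      | top =>
          exact absurd he2 not_top_lt
      | coe r =>
          have hrd : db < r := by exact_mod_cast he1
          set t : ℝ := min 1 ((r - db) / (|d0 - db| + 1)) with htdef
          have hpos : 0 < |d0 - db| + 1 := by positivity
          have ht0 : 0 < t := lt_min one_pos (div_pos (by linarith) hpos)
          have ht1 : t ≤ 1 := min_le_left _ _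
          have hkey := hseg t ht0 ht1
          have hbound : db + t * (d0 - db) ≤ r := by
            have h1 : t ≤ (r - db) / (|d0 - db| + 1) := min_le_right _ _
            have h2 : t * (d0 - db) ≤ t * |d0 - db| :=
              mul_le_mul_of_nonneg_left (le_abs_self _) ht0.le
            have h3 : t * |d0 - db| ≤ (r - db) / (|d0 - db| + 1) * (|d0 - db| + 1) := by
              exact mul_le_mul h1 (by linarith) (abs_nonneg _)
                (div_nonneg (by linarith) hpos.le)
            rw [div_mul_cancel₀ _ (ne_of_gt hpos)] at h3
            linarith
          have : (⨅ x : {x : Fin nx → ℝ // (x, y) ∈ P},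
              ((∑ j, c j * (x : Fin nx → ℝ) j : ℝ) : EReal)) ≤ (r : EReal) :=
            le_trans hkey (by exact_mod_cast hbound)
          exact absurd (lt_of_lt_of_le he2 this) (lt_irrefl _)
    · -- inf over closure ≤ v y
      apply le_iInf
      rintro ⟨x, hx⟩
      exact iInf_le_of_le ⟨x, subset_closure hx⟩ le_rfl
  · intro hne
    rw [hv y]
    have : IsEmpty {x : Fin nx → ℝ // (x, y) ∈ P} := by
      constructor; rintro ⟨x, hx⟩; exact hne ⟨x, hx⟩
    exact iInf_of_empty _
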